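/- Let Q ∈ M_{M×N}(ℂ) be a matrix all of whose entries have modulus 1, and let w = e^{2πi/M}, z = e^{2πi/N}. Then the deformed Fourier matrix H = F_M ⊗_Q F_N ∈ M_{MN}(ℂ), defined by H_{(i,a),(j,b)} = Q_{ib}·w^{ij}·z^{ab} with i,j ∈ ℤ/Mℤ and a,b ∈ ℤ/Nℤ, is a complex Hadamard matrix. -/

import Mathlib

open Matrix BigOperators ComplexConjugate

lemma sum_zmod_pow_val {M : ℕ} [NeZero M] (x : ℂ) :
    ∑ j : ZMod M, x ^ j.val = ∑ k ∈ Finset.range M, x ^ k := by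
  refine Finset.sum_nbij' (fun j => j.val) (fun k => (k : ZMod M)) ?_ ?_ ?_ ?_ ?_
  · intro j _; exact Finset.mem_range.2 (ZMod.val_lt j)
  · intro k _; exact Finset.mem_univ _
  · intro j _; simp [ZMod.natCast_val, ZMod.cast_id]
  · intro k hk; exact ZMod.val_cast_of_lt (Finset.mem_range.1 hk)
  · intro j _; rfl

lemma sum_exp_conj (M : ℕ) [NeZero M] (i i' : ZMod M) :
    ∑ j : ZMod M, Complex.exp (2 * Real.pi * Complex.I * ((i.val : ℂ) * (j.val : ℂ)) / M) *
      conj (Complex.exp (2 * Real.pi * Complex.I * ((i'.val : ℂ) * (j.val : ℂ)) / M)) =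
    if i = i' then (M : ℂ) else 0 := by
  have hM : (M : ℂ) ≠ 0 := Nat.cast_ne_zero.2 (NeZero.ne M)
  set t : ℤ := (i.val : ℤ) - (i'.val : ℤ) with ht
  set x : ℂ := Complex.exp (2 * Real.pi * Complex.I * t / M) with hx
  have hterm : ∀ j : ZMod M,
      Complex.exp (2 * Real.pi * Complex.I * ((i.val : ℂ) * (j.val : ℂ)) / M) *
        conj (Complex.exp (2 * Real.pi * Complex.I * ((i'.val : ℂ) * (j.val : ℂ)) / M))
      = x ^ j.val := by
    intro j
    rw [← Complex.exp_conj, ← Complex.exp_add, hx, ← Complex.exp_nat_mul]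
    congr 1
    have hc : (starRingEnd ℂ) (2 * Real.pi * Complex.I * ((i'.val : ℂ) * (j.val : ℂ)) / M)
        = -(2 * Real.pi * Complex.I * ((i'.val : ℂ) * (j.val : ℂ)) / M) := by
      simp only [map_div₀, _root_.map_mul, Complex.conj_I, Complex.conj_natCast,
        Complex.conj_ofReal, map_ofNat]
      ring
    rw [hc, ht]
    push_cast
    field_simp
    ring
  simp_rw [hterm, sum_zmod_pow_val]
  by_cases h : i = i'
  · subst h
    simp only [ht, sub_self, Int.cast_zero, mul_zero, zero_div, Complex.exp_zero] at hx
    simp [hx, if_pos rfl]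
  · rw [if_neg h]
    have htne : t ≠ 0 := by
      intro h0
      apply h
      have : i.val = i'.val := by omega
      exact ZMod.val_injective M this
    have hxM : x ^ M = 1 := by
      rw [hx, ← Complex.exp_nat_mul]
      have : (M : ℂ) * (2 * Real.pi * Complex.I * t / M) = t * (2 * Real.pi * Complex.I) := by
        field_simp
      rw [this, Complex.exp_int_mul_two_pi_mul_I]
    have hxne : x ≠ 1 := by
      intro h1
      rw [hx, Complex.exp_eq_one_iff] at h1
      obtain ⟨n, hn⟩ := h1
      have h2 : (t : ℂ) = n * M := by
        have h2pi : (2 * Real.pi * Complex.I : ℂ) ≠ 0 := by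
          simp [Real.pi_ne_zero, Complex.I_ne_zero]
        field_simp at hn
        exact mul_left_cancel₀ h2pi (by rw [hn]; ring)
      have h3 : t = n * M := by exact_mod_cast h2
      have : t = 0 := Int.eq_zero_of_abs_lt_dvd ⟨n, by rw [h3, mul_comm]⟩ ?_
      · exact htne this
      · have := ZMod.val_lt i
        have := ZMod.val_lt i'
        rw [ht, abs_sub_lt_iff]
        constructor <;> omega
    rw [geom_sum_eq hxne M, hxM, sub_self, zero_div]

lemma abs_exp_aux (K r s : ℕ) :
    ‖Complex.exp (2 * Real.pi * Complex.I * ((r : ℂ) * (s : ℂ)) / K)‖ = 1 := by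
  rw [show (2 * Real.pi * Complex.I * ((r : ℂ) * (s : ℂ)) / K : ℂ)
      = ((2 * Real.pi * r * s / K : ℝ) : ℂ) * Complex.I by push_cast; ring]
  exact Complex.norm_exp_ofReal_mul_I _

/-- `H` is a complex Hadamard matrix: all entries have modulus one, and the rows are
pairwise orthogonal. -/
def IsHadamard {I : Type*} [Fintype I] [DecidableEq I] (H : Matrix I I ℂ) : Prop :=
  (∀ i j, ‖H i j‖ = 1) ∧
  (∀ i j, ∑ k, H i k * conj (H j k) = if i = j then (Fintype.card I : ℂ) else 0)

/-- The deformed Fourier matrix (Diţă deformation) `F_M ⊗_Q F_N`, with entries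
`H_{(i,a),(j,b)} = Q_{ib}·w^{ij}·z^{ab}`, `w = e^{2πi/M}`, `z = e^{2πi/N}`. -/
noncomputable def defFourier (M N : ℕ) (Q : Matrix (ZMod M) (ZMod N) ℂ) :
    Matrix (ZMod M × ZMod N) (ZMod M × ZMod N) ℂ :=
  fun p q => Q p.1 q.2 *
    Complex.exp (2 * Real.pi * Complex.I * ((p.1.val : ℂ) * (q.1.val : ℂ)) / M) *
    Complex.exp (2 * Real.pi * Complex.I * ((p.2.val : ℂ) * (q.2.val : ℂ)) / N)

/-- if all entries of the parameter matrix `Q ∈ M_{M×N}(ℂ)` have modulus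
one, then the deformed Fourier matrix `F_M ⊗_Q F_N` is a complex Hadamard matrix. -/
theorem defFourier_hadamard (M N : ℕ) [NeZero M] [NeZero N]
    (Q : Matrix (ZMod M) (ZMod N) ℂ) (hQ : ∀ i a, ‖Q i a‖ = 1) :
    _root_.IsHadamard (defFourier M N Q) := by
  constructor
  · intro p q
    unfold defFourier
    rw [norm_mul, norm_mul, hQ, abs_exp_aux, abs_exp_aux]
    ring
  · rintro ⟨i, a⟩ ⟨i', a'⟩
    have hsplit : (∑ k : ZMod M × ZMod N,
        defFourier M N Q (i, a) k * conj (defFourier M N Q (i', a') k)) =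
        (∑ j : ZMod M,
          Complex.exp (2 * Real.pi * Complex.I * ((i.val : ℂ) * (j.val : ℂ)) / M) *
          conj (Complex.exp (2 * Real.pi * Complex.I * ((i'.val : ℂ) * (j.val : ℂ)) / M))) *
        (∑ b : ZMod N, (Q i b * conj (Q i' b)) *
          (Complex.exp (2 * Real.pi * Complex.I * ((a.val : ℂ) * (b.val : ℂ)) / N) *
          conj (Complex.exp (2 * Real.pi * Complex.I * ((a'.val : ℂ) * (b.val : ℂ)) / N)))) := by
      rw [Fintype.sum_prod_type, Finset.sum_mul_sum]
      refine Finset.sum_congr rfl fun j _ => Finset.sum_congr rfl fun b _ => ?_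
      simp only [defFourier, _root_.map_mul]
      ring
    rw [hsplit, sum_exp_conj]
    by_cases h : i = i'
    · subst h
      rw [if_pos rfl]
      have hQ1 : ∀ b, Q i b * conj (Q i b) = 1 := by
        intro b
        rw [Complex.mul_conj, Complex.normSq_eq_norm_sq, hQ]
        norm_num
      simp_rw [hQ1, one_mul]
      rw [sum_exp_conj]
      by_cases h2 : a = a'
      · subst h2
        simp [Fintype.card_prod, ZMod.card]
      · simp [h2, Prod.ext_iff]
    · simp [h, Prod.ext_iff]
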